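/- Let H be a complex Hilbert space, T a bounded invertible linear operator on H, and f₀ ∈ H such that {T^k f₀}_{k∈ℤ} is a tight frame for H. Suppose U is a bounded linear operator on H and g₀ ∈ H are such that {U^k g₀}_{k∈ℤ} is a dual frame of {T^k f₀}_{k∈ℤ}, i.e., {U^k g₀}_{k∈ℤ} is a frame for H and f = Σ_{k∈ℤ} ⟨f, U^k g₀⟩ T^k f₀ for every f ∈ H. Then U = T. -/
import Mathlib


open scoped ComplexInnerProductSpace

open ContinuousLinearMap in
/-- If `{T^k f₀}_{k∈ℤ}` is a tight frame for `H` (with `T` bounded and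
invertible) and `{U^k g₀}_{k∈ℤ}` is a dual frame of it (with `U` bounded and
invertible), then `U = T`. -/
theorem dual_frame_operator_eq_of_zorbit_tight_frame
    {H : Type*} [NormedAddCommGroup H] [InnerProductSpace ℂ H] [CompleteSpace H]
    (T U : H ≃L[ℂ] H) (f₀ g₀ : H)
    (htight : ∃ A : ℝ, 0 < A ∧ ∀ f : H,
      HasSum (fun k : ℤ => ‖⟪f, (T ^ k) f₀⟫‖ ^ 2) (A * ‖f‖ ^ 2))
    (hUframe : ∃ A B : ℝ, 0 < A ∧ 0 < B ∧ ∀ f : H,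
      A * ‖f‖ ^ 2 ≤ ∑' k : ℤ, ‖⟪f, (U ^ k) g₀⟫‖ ^ 2 ∧
      ∑' k : ℤ, ‖⟪f, (U ^ k) g₀⟫‖ ^ 2 ≤ B * ‖f‖ ^ 2)
    (hdual : ∀ f : H,
      HasSum (fun k : ℤ => (⟪f, (U ^ k) g₀⟫ : ℂ) • (T ^ k) f₀) f) :
    U = T := by
  clear hUframe
  obtain ⟨A, hA, htight⟩ := htight
  set Tc : H →L[ℂ] H := (T : H →L[ℂ] H) with hTc
  set Uinv : H →L[ℂ] H := ((U⁻¹ : H ≃L[ℂ] H) : H →L[ℂ] H) with hUinv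
  -- Step A : T f = (U⁻¹)† f for all f
  have hstepA : ∀ f : H, T f = adjoint Uinv f := by
    intro f
    have h1 : HasSum (fun k : ℤ =>
        (⟪adjoint Uinv f, (U ^ k) g₀⟫ : ℂ) • (T ^ k) f₀) (adjoint Uinv f) := hdual _
    have h2 : HasSum (fun k : ℤ =>
        (⟪f, (U ^ k) g₀⟫ : ℂ) • (T ^ (k + 1)) f₀) (T f) := by
      have := (hdual f).mapL Tc
      refine this.congr_fun fun k => ?_
      simp only [map_smul]
      congr 1
      have hT1 : (T ^ (k + 1)) = T * T ^ k := by
        rw [add_comm, zpow_add, zpow_one]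
      rw [hT1]
      rfl
    have h3 : HasSum (fun k : ℤ =>
        (⟪f, (U ^ (k - 1)) g₀⟫ : ℂ) • (T ^ k) f₀) (T f) := by
      have := ((Equiv.subRight (1 : ℤ)).hasSum_iff).mpr h2
      refine this.congr_fun fun k => ?_
      simp [Equiv.subRight, sub_add_cancel]
    have hco : ∀ k : ℤ, (⟪adjoint Uinv f, (U ^ k) g₀⟫ : ℂ)
        = ⟪f, (U ^ (k - 1)) g₀⟫ := by
      intro k
      rw [adjoint_inner_left]
      congr 1
      have : (U ^ (k - 1)) = U⁻¹ * U ^ k := by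
        rw [← zpow_neg_one, ← zpow_add, neg_add_eq_sub]
      rw [this]
      rfl
    have h1' : HasSum (fun k : ℤ =>
        (⟪f, (U ^ (k - 1)) g₀⟫ : ℂ) • (T ^ k) f₀) (adjoint Uinv f) :=
      h1.congr_fun fun k => by rw [hco]
    exact (h3.unique h1')
  -- Step B : ‖T† f‖ = ‖f‖ for all f
  have hstepB : ∀ f : H, ‖adjoint Tc f‖ = ‖f‖ := by
    intro f
    have h1 : HasSum (fun k : ℤ => ‖⟪adjoint Tc f, (T ^ k) f₀⟫‖ ^ 2)
        (A * ‖adjoint Tc f‖ ^ 2) := htight _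
    have h2 : HasSum (fun k : ℤ => ‖⟪f, (T ^ (k + 1)) f₀⟫‖ ^ 2)
        (A * ‖f‖ ^ 2) := by
      have := ((Equiv.addRight (1 : ℤ)).hasSum_iff).mpr (htight f)
      exact this.congr_fun fun k => by simp [Equiv.addRight]
    have hco : ∀ k : ℤ, (⟪adjoint Tc f, (T ^ k) f₀⟫ : ℂ)
        = ⟪f, (T ^ (k + 1)) f₀⟫ := by
      intro k
      rw [adjoint_inner_left]
      congr 1
      have : (T ^ (k + 1)) = T * T ^ k := by
        rw [add_comm, zpow_add, zpow_one]
      rw [this]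
      rfl
    have h1' : HasSum (fun k : ℤ => ‖⟪f, (T ^ (k + 1)) f₀⟫‖ ^ 2)
        (A * ‖adjoint Tc f‖ ^ 2) := h1.congr_fun fun k => by rw [hco]
    have hAeq : A * ‖adjoint Tc f‖ ^ 2 = A * ‖f‖ ^ 2 := h1'.unique h2
    have hsq : ‖adjoint Tc f‖ ^ 2 = ‖f‖ ^ 2 :=
      mul_left_cancel₀ (ne_of_gt hA) hAeq
    nlinarith [norm_nonneg (adjoint Tc f), norm_nonneg f]
  -- T T† = 1
  have hTTdag : Tc ∘L adjoint Tc = 1 := by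
    have := (norm_map_iff_adjoint_comp_self (adjoint Tc)).mp hstepB
    rwa [adjoint_adjoint] at this
  -- T† = U⁻¹ as continuous linear maps
  have hTc_eq : Tc = adjoint Uinv := ContinuousLinearMap.ext fun f => hstepA f
  have hadj : adjoint Tc = Uinv := by rw [hTc_eq, adjoint_adjoint]
  -- conclude
  ext x
  have h := congrArg (fun (S : H →L[ℂ] H) => S (U x)) hTTdag
  simp only [ContinuousLinearMap.comp_apply, ContinuousLinearMap.one_apply] at h
  rw [hadj] at h
  have hux : Uinv (U x) = x := by
    have : (U⁻¹ : H ≃L[ℂ] H) (U x) = x := U.symm_apply_apply x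
    simpa [hUinv] using this
  rw [hux] at h
  exact h.symm
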